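/- Let K be a field and let N be a 2×2 nilpotent matrix over the polynomial ring K[x_1,…,x_n]. Then there exist a, b, c ∈ K[x_1,…,x_n] such that N = c·[[ab, −b²],[a², −ab]], and a and b can be chosen relatively prime. -/

import Mathlib

open MvPolynomial

lemma key_factor {R : Type*} [CommRing R] [IsDomain R] [UniqueFactorizationMonoid R]
    {p q r : R} (h : p ^ 2 = -(q * r)) :
    ∃ a b c : R, IsRelPrime a b ∧ p = c * (a * b) ∧ q = -(c * b ^ 2) ∧ r = c * a ^ 2 := by
  classical
  letI : NormalizedGCDMonoid R := (inferInstance : Nonempty (NormalizedGCDMonoid R)).some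
  by_cases hq : q = 0
  · by_cases hr : r = 0
    · have hp : p = 0 := by
        have : p ^ 2 = 0 := by simp [h, hq]
        exact pow_eq_zero_iff two_ne_zero |>.mp this
      exact ⟨1, 0, 0, isRelPrime_one_left, by simp [hp, hq, hr]⟩
    · have hp : p = 0 := by
        have : p ^ 2 = 0 := by simp [h, hq]
        exact pow_eq_zero_iff two_ne_zero |>.mp this
      exact ⟨1, 0, r, isRelPrime_one_left, by simp [hp, hq]⟩
  by_cases hr : r = 0
  · have hp : p = 0 := by
      have : p ^ 2 = 0 := by simp [h, hr]
      exact pow_eq_zero_iff two_ne_zero |>.mp this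
    exact ⟨0, 1, -q, isRelPrime_one_right, by simp [hp, hr]⟩
  -- main case
  obtain ⟨q₁, r₁, hq1, hr1, hu⟩ := extract_gcd q r
  set g := gcd q r with hg
  have hg0 : g ≠ 0 := fun h0 => hq ((gcd_eq_zero_iff q r).mp h0).1
  have hq₁0 : q₁ ≠ 0 := fun h0 => hq (by rw [hq1, h0, mul_zero])
  have hr₁0 : r₁ ≠ 0 := fun h0 => hr (by rw [hr1, h0, mul_zero])
  have hdvd : g ^ 2 ∣ p ^ 2 := ⟨-(q₁ * r₁), by rw [h, hq1, hr1]; ring⟩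
  obtain ⟨p₁, hp1⟩ := (IsIntegrallyClosed.pow_dvd_pow_iff two_ne_zero).mp hdvd
  have hkey : -q₁ * r₁ = p₁ ^ 2 := by
    have h2 : g ^ 2 * (-q₁ * r₁) = g ^ 2 * p₁ ^ 2 := by
      rw [← mul_pow, ← hp1, h, hq1, hr1]; ring
    exact (mul_left_cancel₀ (pow_ne_zero 2 hg0) h2)
  have hgu : IsUnit (gcd (-q₁) r₁) := by
    refine isUnit_of_dvd_unit (dvd_gcd ?_ (gcd_dvd_right _ _)) hu
    exact (dvd_neg.mp (gcd_dvd_left _ _))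
  obtain ⟨b₀, hb₀⟩ := exists_associated_pow_of_mul_eq_pow hgu hkey
  have hgu' : IsUnit (gcd r₁ (-q₁)) := isUnit_of_dvd_unit (dvd_gcd (gcd_dvd_right _ _) (gcd_dvd_left _ _)) hgu
  obtain ⟨a₀, ha₀⟩ := exists_associated_pow_of_mul_eq_pow hgu' (by rw [← hkey]; ring)
  obtain ⟨u, hu2⟩ := hb₀  -- b₀^2 * u = -q₁
  obtain ⟨v, hv2⟩ := ha₀  -- a₀^2 * v = r₁
  have ha₀0 : a₀ ≠ 0 := by
    rintro rfl; apply hr₁0; rw [← hv2]; ring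
  have hb₀0 : b₀ ≠ 0 := by
    rintro rfl
    apply hq₁0
    have : -q₁ = 0 := by rw [← hu2]; ring
    simpa [neg_eq_zero] using this
  have hdvd2 : (a₀ * b₀) ^ 2 ∣ p₁ ^ 2 := by
    refine ⟨↑u * ↑v, ?_⟩
    rw [← hkey, ← hu2, ← hv2]; ring
  obtain ⟨w, hw⟩ := (IsIntegrallyClosed.pow_dvd_pow_iff two_ne_zero).mp hdvd2
  have hw2 : w ^ 2 = ↑u * ↑v := by
    have h2 : (a₀ * b₀) ^ 2 * (w ^ 2) = (a₀ * b₀) ^ 2 * (↑u * ↑v) := by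
      rw [← mul_pow, ← hw, ← hkey, ← hu2, ← hv2]; ring
    exact mul_left_cancel₀ (pow_ne_zero 2 (mul_ne_zero ha₀0 hb₀0)) h2
  have hvvi : (↑v : R) * ↑v⁻¹ = 1 := by
    rw [← Units.val_mul, mul_inv_cancel, Units.val_one]
  -- coprimality of a₀ b₀
  have hrel : IsRelPrime (↑v * a₀) (w * b₀) := by
    intro d hda hdb
    refine isUnit_of_dvd_unit (dvd_gcd ?_ ?_) hu
    · -- d ∣ q₁
      have hdb₀ : d ∣ b₀ := by
        have hwu : IsUnit w := by
          have : w ∣ ↑(u * v) := by rw [Units.val_mul, ← hw2]; exact dvd_pow_self w two_ne_zero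
          exact isUnit_of_dvd_unit this (u * v).isUnit
        obtain ⟨w'', hw''⟩ := hwu
        rcases hdb with ⟨e, he⟩
        refine ⟨↑w''⁻¹ * e, ?_⟩
        have h3 : (↑w''⁻¹ : R) * (w * b₀) = ↑w''⁻¹ * (d * e) := by rw [he]
        rw [← hw''] at h3
        calc b₀ = (↑w''⁻¹ * ↑w'') * b₀ := by rw [← Units.val_mul, inv_mul_cancel, Units.val_one, one_mul]
          _ = ↑w''⁻¹ * (↑w'' * b₀) := by ring
          _ = ↑w''⁻¹ * (d * e) := h3
          _ = d * (↑w''⁻¹ * e) := by ring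
      have : d ∣ -q₁ := by
        rw [← hu2]; exact Dvd.dvd.mul_right (dvd_pow hdb₀ two_ne_zero) _
      exact dvd_neg.mp this
    · have hda₀ : d ∣ a₀ := by
        rcases hda with ⟨e, he⟩
        refine ⟨↑v⁻¹ * e, ?_⟩
        calc a₀ = (↑v⁻¹ * ↑v) * a₀ := by rw [← Units.val_mul, inv_mul_cancel, Units.val_one, one_mul]
          _ = ↑v⁻¹ * (↑v * a₀) := by ring
          _ = ↑v⁻¹ * (d * e) := by rw [he]
          _ = d * (↑v⁻¹ * e) := by ring
      rw [← hv2]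
      exact Dvd.dvd.mul_right (dvd_pow hda₀ two_ne_zero) _
  refine ⟨↑v * a₀, w * b₀, g * ↑v⁻¹, hrel, ?_, ?_, ?_⟩
  · rw [hp1, hw]
    rw [show g * ↑v⁻¹ * (↑v * a₀ * (w * b₀)) = (↑v * ↑v⁻¹) * (g * (a₀ * b₀ * w)) by ring, hvvi]
    ring
  · rw [hq1, show q₁ = -(b₀ ^ 2 * ↑u) by rw [hu2]; ring]
    rw [show g * ↑v⁻¹ * (w * b₀) ^ 2 = g * ↑v⁻¹ * (w ^ 2 * b₀ ^ 2) by ring, hw2]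
    rw [show g * ↑v⁻¹ * (↑u * ↑v * b₀ ^ 2) = (↑v * ↑v⁻¹) * (g * (b₀ ^ 2 * ↑u)) by ring, hvvi]
    ring
  · rw [hr1, ← hv2]
    rw [show g * ↑v⁻¹ * (↑v * a₀) ^ 2 = (↑v * ↑v⁻¹) * (g * (a₀ ^ 2 * ↑v)) by ring, hvvi]
    ring

/-- A nilpotent `2 × 2` matrix over `K[x]` has the form `c·[[ab, -b²], [a², -ab]]`
with `a` and `b` relatively prime. -/
theorem nilpotent_two_by_two_form {K : Type*} [Field K] {n : ℕ}
    (N : Matrix (Fin 2) (Fin 2) (MvPolynomial (Fin n) K))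
    (hN : IsNilpotent N) :
    ∃ a b c : MvPolynomial (Fin n) K, IsRelPrime a b ∧
      N = c • !![a * b, -b ^ 2; a ^ 2, -(a * b)] := by
  have htr : N.trace = 0 := (Matrix.isNilpotent_trace_of_isNilpotent hN).eq_zero
  have hdet : N.det = 0 := by
    obtain ⟨k, hk⟩ := hN
    rcases Nat.eq_zero_or_pos k with rfl | hkpos
    · have h1 : (1 : Matrix (Fin 2) (Fin 2) (MvPolynomial (Fin n) K)) = 0 := by simpa using hk
      exact absurd h1 one_ne_zero
    · have hdk : N.det ^ k = 0 := by
        rw [← Matrix.det_pow, hk, Matrix.det_zero]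
      exact pow_eq_zero_iff hkpos.ne' |>.mp hdk
  have h11 : N 1 1 = -(N 0 0) := by
    rw [Matrix.trace_fin_two] at htr; linear_combination htr
  have hsq : (N 0 0) ^ 2 = -(N 0 1 * N 1 0) := by
    rw [Matrix.det_fin_two, h11] at hdet
    linear_combination -hdet
  obtain ⟨a, b, c, hab, hp, hq, hr⟩ := key_factor hsq
  refine ⟨a, b, c, hab, ?_⟩
  ext i j
  fin_cases i <;> fin_cases j <;>
    simp [Matrix.smul_apply, smul_eq_mul, h11, hp, hq, hr] <;> ring
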